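/- Let G be a group with finite presentation ⟨x₁,…,x_n | R₁,…,R_p⟩ and let r be the maximal length of a relator. If 2d > r, then the Rips complex P_d(G) is simply connected. -/

import Mathlib

/-- Word metric: the least number of generators from `S` needed to write `x⁻¹y`. -/
noncomputable def wordDist {G : Type*} [Group G] (S : Set G) (x y : G) : ℕ :=
  sInf {n : ℕ | ∃ l : List G, l.length = n ∧ (∀ s ∈ l, s ∈ S) ∧ x * l.prod = y}

/-- Elementary moves on simplicial edge paths in the Rips complex with
closeness relation `close`: insert a vertex forming a triangle, or remove a
repeated vertex. -/
inductive RipsMove {V : Type*} (close : V → V → Prop) : List V → List V → Prop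
  | ins (u w : List V) (a b c : V) :
      close a c → close c b → close a b →
      RipsMove close (u ++ [a, b] ++ w) (u ++ [a, c, b] ++ w)
  | dedup (u w : List V) (a : V) :
      RipsMove close (u ++ [a, a] ++ w) (u ++ [a] ++ w)

/-- The symmetric generating set of a presented group: the images of the
generators and their inverses. -/
def presGens {n : ℕ} (rels : Set (FreeGroup (Fin n))) : Set (PresentedGroup rels) :=
  Set.range (PresentedGroup.of (rels := rels)) ∪
    (fun g => g⁻¹) '' Set.range (PresentedGroup.of (rels := rels))


namespace Stmt7Aux

variable {G : Type*} [Group G] {S : Set G} {d : ℕ}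

theorem wordDist_le (S : Set G) {x y : G} (l : List G) (hl : ∀ s ∈ l, s ∈ S)
    (h : x * l.prod = y) : wordDist S x y ≤ l.length :=
  Nat.sInf_le ⟨l, rfl, hl, h⟩

theorem wordDist_self (S : Set G) (x : G) : wordDist S x x = 0 :=
  Nat.le_zero.mp (by simpa using wordDist_le S (x := x) (y := x) [] (by simp) (by simp))

theorem close_refl (S : Set G) (d : ℕ) (x : G) : wordDist S x x ≤ d := by
  simp [wordDist_self]

theorem close_symm (hS : ∀ s ∈ S, s⁻¹ ∈ S) {x y : G} (h : wordDist S x y ≤ d) :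
    wordDist S y x ≤ d := by
  by_cases hne : {n : ℕ | ∃ l : List G, l.length = n ∧ (∀ s ∈ l, s ∈ S) ∧ x * l.prod = y}.Nonempty
  · obtain ⟨l, hlen, hmem, hprod⟩ := Nat.sInf_mem hne
    have h2 : wordDist S y x ≤ ((l.map fun s => s⁻¹).reverse).length := by
      refine wordDist_le S _ (fun s hs => ?_) ?_
      · simp only [List.mem_reverse, List.mem_map] at hs
        obtain ⟨a, ha, rfl⟩ := hs
        exact hS a (hmem a ha)
      · rw [← List.prod_inv_reverse, ← hprod]; group
    have h3 : ((l.map fun s => s⁻¹).reverse).length = wordDist S x y := by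
      simp only [List.length_reverse, List.length_map]; exact hlen
    exact h2.trans (h3.le.trans h)
  · have hne' : ¬ {n : ℕ | ∃ l : List G, l.length = n ∧ (∀ s ∈ l, s ∈ S) ∧ y * l.prod = x}.Nonempty := by
      rintro ⟨m, l, hlen, hmem, hprod⟩
      refine hne ⟨((l.map fun s => s⁻¹).reverse).length, (l.map fun s => s⁻¹).reverse, rfl, ?_, ?_⟩
      · intro s hs
        simp only [List.mem_reverse, List.mem_map] at hs
        obtain ⟨a, ha, rfl⟩ := hs
        exact hS a (hmem a ha)
      · rw [← List.prod_inv_reverse, ← hprod]; group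
    rw [Set.not_nonempty_iff_eq_empty] at hne'
    simp [wordDist, hne']


section Moves

variable {V : Type*} {close : V → V → Prop}

/-- abbreviation for the equivalence generated by moves -/
def E (close : V → V → Prop) : List V → List V → Prop :=
  Relation.EqvGen (RipsMove close)

theorem E.refl (l : List V) : E close l l := Relation.EqvGen.refl l
theorem E.symm {l l' : List V} (h : E close l l') : E close l' l := Relation.EqvGen.symm _ _ h
theorem E.trans {l₁ l₂ l₃ : List V} (h : E close l₁ l₂) (h' : E close l₂ l₃) : E close l₁ l₃ :=
  Relation.EqvGen.trans _ _ _ h h'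

theorem move_context (p q : List V) {l l' : List V} (h : RipsMove close l l') :
    RipsMove close (p ++ l ++ q) (p ++ l' ++ q) := by
  cases h with
  | ins u w a b c h1 h2 h3 =>
      have := RipsMove.ins (close := close) (p ++ u) (w ++ q) a b c h1 h2 h3
      simpa [List.append_assoc] using this
  | dedup u w a =>
      have := RipsMove.dedup (close := close) (p ++ u) (w ++ q) a
      simpa [List.append_assoc] using this

theorem E_context (p q : List V) {l l' : List V} (h : E close l l') :
    E close (p ++ l ++ q) (p ++ l' ++ q) := by
  induction h with
  | rel a b h => exact Relation.EqvGen.rel _ _ (move_context p q h)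
  | refl a => exact E.refl _
  | symm a b _ ih => exact ih.symm
  | trans a b c _ _ ih₁ ih₂ => exact ih₁.trans ih₂

theorem E_ins (u w : List V) (a b c : V) (h1 : close a c) (h2 : close c b) (h3 : close a b) :
    E close (u ++ [a, b] ++ w) (u ++ [a, c, b] ++ w) :=
  Relation.EqvGen.rel _ _ (RipsMove.ins u w a b c h1 h2 h3)

theorem E_remove_mid (u w : List V) (a b c : V) (h1 : close a b) (h2 : close b c)
    (h3 : close a c) : E close (u ++ [a, b, c] ++ w) (u ++ [a, c] ++ w) :=
  (E_ins u w a c b h1 h2 h3).symm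

theorem E_dedup (u w : List V) (a : V) : E close (u ++ [a, a] ++ w) (u ++ [a] ++ w) :=
  Relation.EqvGen.rel _ _ (RipsMove.dedup u w a)

theorem move_reverse (hsymm : ∀ a b, close a b → close b a) {l l' : List V}
    (h : RipsMove close l l') : RipsMove close l.reverse l'.reverse := by
  cases h with
  | ins u w a b c h1 h2 h3 =>
      have := RipsMove.ins (close := close) w.reverse u.reverse b a c (hsymm _ _ h2) (hsymm _ _ h1)
        (hsymm _ _ h3)
      simpa [List.reverse_append, List.append_assoc] using this
  | dedup u w a =>
      have := RipsMove.dedup (close := close) w.reverse u.reverse a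
      simpa [List.reverse_append, List.append_assoc] using this

theorem E_reverse (hsymm : ∀ a b, close a b → close b a) {l l' : List V}
    (h : E close l l') : E close l.reverse l'.reverse := by
  induction h with
  | rel a b h => exact Relation.EqvGen.rel _ _ (move_reverse hsymm h)
  | refl a => exact E.refl _
  | symm a b _ ih => exact ih.symm
  | trans a b c _ _ ih₁ ih₂ => exact ih₁.trans ih₂

end Moves


section Path

variable {G : Type*} [Group G] {S : Set G} {d : ℕ}

/-- The path of vertices obtained from `x` by successively multiplying the steps. -/
def pathFrom (x : G) : List G → List G
  | [] => [x]
  | s :: t => x :: pathFrom (x * s) t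

@[simp] theorem pathFrom_nil (x : G) : pathFrom x [] = [x] := rfl
@[simp] theorem pathFrom_cons (x s : G) (t : List G) :
    pathFrom x (s :: t) = x :: pathFrom (x * s) t := rfl

theorem pathFrom_ne_nil (x : G) (w : List G) : pathFrom x w ≠ [] := by
  cases w <;> simp [pathFrom]

theorem pathFrom_eq_cons (x : G) (w : List G) :
    pathFrom x w = x :: (pathFrom x w).tail := by
  cases w <;> simp [pathFrom]

theorem pathFrom_append (x : G) (w₁ w₂ : List G) :
    pathFrom x (w₁ ++ w₂) = (pathFrom x w₁).dropLast ++ pathFrom (x * w₁.prod) w₂ := by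
  induction w₁ generalizing x with
  | nil => simp
  | cons s t ih =>
      simp only [List.cons_append, pathFrom_cons, ih (x * s), List.prod_cons, mul_assoc]
      rw [List.dropLast_cons_of_ne_nil (pathFrom_ne_nil _ _)]
      simp

theorem pathFrom_concat (x : G) (w : List G) :
    pathFrom x w = (pathFrom x w).dropLast ++ [x * w.prod] := by
  have := pathFrom_append x w []
  simpa using this

theorem mem_pathFrom {x a : G} {w : List G} (h : a ∈ pathFrom x w) :
    ∃ i ≤ w.length, a = x * (w.take i).prod := by
  induction w generalizing x with
  | nil =>
      simp only [pathFrom_nil, List.mem_singleton] at h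
      exact ⟨0, by simp, by simp [h]⟩
  | cons s t ih =>
      simp only [pathFrom_cons, List.mem_cons] at h
      rcases h with rfl | h
      · exact ⟨0, by simp⟩
      · obtain ⟨i, hi, rfl⟩ := ih h
        exact ⟨i + 1, by simpa using hi, by simp [List.take_cons, mul_assoc]⟩

theorem pathFrom_reverse (x : G) (w : List G) :
    (pathFrom x w).reverse = pathFrom (x * w.prod) ((w.map fun s => s⁻¹).reverse) := by
  induction w generalizing x with
  | nil => simp
  | cons s t ih =>
      have hu : ((t.map fun s => s⁻¹).reverse).prod = t.prod⁻¹ := (List.prod_inv_reverse t).symm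
      simp only [pathFrom_cons, List.reverse_cons, List.map_cons, List.prod_cons, ih (x * s)]
      conv_lhs => rw [pathFrom_concat (x * s * t.prod) ((t.map fun s => s⁻¹).reverse)]
      rw [pathFrom_append, hu]
      simp [pathFrom, mul_assoc]

/-- Inserting the whole geodesic path between two close vertices. -/
theorem insert_path (hd1 : 1 ≤ d) :
    ∀ (steps : List G), (∀ s ∈ steps, s ∈ S) → steps.length ≤ d → ∀ (u v : List G) (a : G),
      E (fun a b => wordDist S a b ≤ d) (u ++ [a, a * steps.prod] ++ v)
        (u ++ pathFrom a steps ++ v) := by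
  intro steps
  induction steps with
  | nil =>
      intro _ _ u v a
      simpa using E_dedup (close := fun a b => wordDist S a b ≤ d) u v a
  | cons s t ih =>
      intro hmem hlen u v a
      have h1 : wordDist S a (a * s) ≤ d := by
        have h := wordDist_le S (x := a) (y := a * s) [s]
          (by simpa using hmem s (by simp)) (by simp)
        simp only [List.length_singleton] at h
        exact h.trans hd1
      have h2 : wordDist S (a * s) (a * (s :: t).prod) ≤ d := by
        have h := wordDist_le S (x := a * s) (y := a * (s :: t).prod) t
          (fun x hx => hmem x (by simp [hx])) (by simp [mul_assoc])
        have ht : t.length ≤ d := by simp at hlen; omega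
        exact h.trans ht
      have h3 : wordDist S a (a * (s :: t).prod) ≤ d := by
        have h := wordDist_le S (x := a) (y := a * (s :: t).prod) (s :: t) hmem rfl
        exact h.trans hlen
      have h4 := ih (fun x hx => hmem x (by simp [hx]))
        (by simp at hlen ⊢; omega) (u ++ [a]) v (a * s)
      refine (E_ins u v a (a * (s :: t).prod) (a * s) h1 h2 h3).trans ?_
      simpa [List.append_assoc, mul_assoc] using h4

/-- Removing a backtrack `s, s⁻¹` from a path. -/
theorem contract_backtrack (hd1 : 1 ≤ d) (hS : ∀ s ∈ S, s⁻¹ ∈ S) {s s' : G} (hs : s ∈ S)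
    (hss' : s' = s⁻¹) (x : G) (u v : List G) :
    E (fun a b => wordDist S a b ≤ d) (pathFrom x (u ++ s :: s' :: v)) (pathFrom x (u ++ v)) := by
  subst hss'
  set y := x * u.prod with hy
  have hclose : wordDist S y (y * s) ≤ d := by
    have h := wordDist_le S (x := y) (y := y * s) [s] (by simpa using hs) (by simp)
    simp only [List.length_singleton] at h
    exact h.trans hd1
  have hclose' : wordDist S (y * s) y ≤ d := close_symm hS hclose
  obtain ⟨T, hT⟩ : ∃ T, pathFrom y v = y :: T := ⟨_, pathFrom_eq_cons y v⟩
  have h1 : pathFrom x (u ++ s :: s⁻¹ :: v) =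
      (pathFrom x u).dropLast ++ [y, y * s, y] ++ T := by
    rw [pathFrom_append]
    have hmid : pathFrom y (s :: s⁻¹ :: v) = y :: (y * s) :: pathFrom y v := by
      simp [pathFrom]
    rw [hmid, hT]
    simp
  have h2 : pathFrom x (u ++ v) = (pathFrom x u).dropLast ++ [y] ++ T := by
    rw [pathFrom_append, hT]
    simp
  rw [h1, h2]
  have e1 := E_remove_mid (close := fun a b => wordDist S a b ≤ d) ((pathFrom x u).dropLast) T
    y (y * s) y hclose hclose' (close_refl S d y)
  have e2 := E_dedup (close := fun a b => wordDist S a b ≤ d) ((pathFrom x u).dropLast) T y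
  exact e1.trans e2

theorem contract_clique (x : G) :
    ∀ t : List G, (∀ a ∈ x :: t, ∀ b ∈ x :: t, wordDist S a b ≤ d) →
      E (fun a b => wordDist S a b ≤ d) (x :: (t ++ [x])) [x] := by
  intro t
  induction t with
  | nil =>
      intro _
      simpa using E_dedup (close := fun a b => wordDist S a b ≤ d) [] [] x
  | cons a t' ih =>
      intro hcl
      obtain ⟨c, rest, hcr⟩ : ∃ c rest, t' ++ [x] = c :: rest := by
        cases t' with
        | nil => exact ⟨x, [], rfl⟩
        | cons b t'' => exact ⟨b, t'' ++ [x], rfl⟩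
      have hcmem : c ∈ x :: a :: t' := by
        have : c ∈ t' ++ [x] := by rw [hcr]; simp
        rcases List.mem_append.mp this with h | h
        · simp [h]
        · simp at h; simp [h]
      have hstep : E (fun a b => wordDist S a b ≤ d) (x :: (a :: t' ++ [x])) (x :: (t' ++ [x])) := by
        have := E_remove_mid (close := fun a b => wordDist S a b ≤ d) [] rest x a c
          (hcl x (by simp) a (by simp)) (hcl a (by simp) c hcmem) (hcl x (by simp) c hcmem)
        simpa [hcr] using this
      exact hstep.trans (ih (fun p hp q hq => hcl p (by simp at hp ⊢; tauto) q
        (by simp at hq ⊢; tauto)))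

end Path


section Presented

variable {n : ℕ} {rels : Set (FreeGroup (Fin n))} {d : ℕ}

/-- The generator associated to a letter. -/
def stepOf (rels : Set (FreeGroup (Fin n))) (p : Fin n × Bool) : PresentedGroup rels :=
  if p.2 then PresentedGroup.of p.1 else (PresentedGroup.of p.1)⁻¹

def stepsOf (rels : Set (FreeGroup (Fin n))) (w : List (Fin n × Bool)) :
    List (PresentedGroup rels) := w.map (stepOf rels)

@[simp] theorem stepsOf_nil : stepsOf rels [] = [] := rfl
@[simp] theorem stepsOf_cons (p) (w : List (Fin n × Bool)) :
    stepsOf rels (p :: w) = stepOf rels p :: stepsOf rels w := rfl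
@[simp] theorem stepsOf_append (w w' : List (Fin n × Bool)) :
    stepsOf rels (w ++ w') = stepsOf rels w ++ stepsOf rels w' := List.map_append

theorem stepOf_mem (p : Fin n × Bool) : stepOf rels p ∈ presGens rels := by
  obtain ⟨i, b⟩ := p
  cases b with
  | true => exact Or.inl ⟨i, rfl⟩
  | false => exact Or.inr ⟨PresentedGroup.of i, ⟨i, rfl⟩, rfl⟩

theorem presGens_inv : ∀ s ∈ presGens rels, s⁻¹ ∈ presGens rels := by
  rintro s (⟨i, rfl⟩ | ⟨g, ⟨i, rfl⟩, rfl⟩)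
  · exact Or.inr ⟨_, ⟨i, rfl⟩, rfl⟩
  · simp only [inv_inv]
    exact Or.inl ⟨i, rfl⟩

theorem mem_of_mem_stepsOf {w : List (Fin n × Bool)} {e : PresentedGroup rels}
    (he : e ∈ stepsOf rels w) : e ∈ presGens rels := by
  rw [stepsOf, List.mem_map] at he
  obtain ⟨p, _, rfl⟩ := he
  exact stepOf_mem p

theorem prod_stepsOf (w : List (Fin n × Bool)) :
    (stepsOf rels w).prod = PresentedGroup.mk rels (FreeGroup.mk w) := by
  induction w with
  | nil =>
      simp only [stepsOf_nil, List.prod_nil, ← FreeGroup.one_eq_mk, map_one]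
  | cons p t ih =>
      have hmk : FreeGroup.mk (p :: t) = FreeGroup.mk [p] * FreeGroup.mk t := by
        rw [FreeGroup.mul_mk]
        rfl
      rw [stepsOf_cons, List.prod_cons, hmk, map_mul, ih]
      congr 1
      obtain ⟨i, b⟩ := p
      cases b with
      | true => rfl
      | false =>
          show (PresentedGroup.of i)⁻¹ = _
          have h1 : FreeGroup.mk [(i, false)] = (FreeGroup.of i)⁻¹ := by
            rw [show FreeGroup.of i = FreeGroup.mk [(i, true)] from rfl, FreeGroup.inv_mk]
            rfl
          rw [h1, map_inv]
          rfl

theorem mk_eq_one_iff {g : FreeGroup (Fin n)} :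
    PresentedGroup.mk rels g = 1 ↔ g ∈ Subgroup.normalClosure rels :=
  QuotientGroup.eq_one_iff g

theorem exists_word_of_steps :
    ∀ steps : List (PresentedGroup rels), (∀ s ∈ steps, s ∈ presGens rels) →
      ∃ w, stepsOf rels w = steps := by
  intro steps
  induction steps with
  | nil => exact fun _ => ⟨[], rfl⟩
  | cons s t ih =>
      intro h
      obtain ⟨w, hw⟩ := ih fun a ha => h a (by simp [ha])
      rcases h s (by simp) with ⟨i, rfl⟩ | ⟨g, ⟨i, rfl⟩, rfl⟩
      · exact ⟨(i, true) :: w, by simp [stepOf, hw]⟩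
      · exact ⟨(i, false) :: w, by simp [stepOf, hw]⟩

theorem exists_word (x y : PresentedGroup rels) :
    ∃ l : List (PresentedGroup rels), (∀ s ∈ l, s ∈ presGens rels) ∧ x * l.prod = y := by
  obtain ⟨g, hg⟩ := PresentedGroup.mk_surjective rels (x⁻¹ * y)
  refine ⟨stepsOf rels g.toWord, fun s hs => mem_of_mem_stepsOf hs, ?_⟩
  rw [prod_stepsOf, FreeGroup.mk_toWord, hg]
  group

theorem E_step (hd1 : 1 ≤ d) {L L' : List (Fin n × Bool)} (h : FreeGroup.Red.Step L L')
    (x : PresentedGroup rels) :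
    E (fun a b => wordDist (presGens rels) a b ≤ d) (pathFrom x (stepsOf rels L))
      (pathFrom x (stepsOf rels L')) := by
  cases h with
  | @not L₁ L₂ i b =>
      have key := contract_backtrack (S := presGens rels) hd1 presGens_inv
        (s := stepOf rels (i, b)) (s' := stepOf rels (i, !b)) (stepOf_mem _)
        (by cases b <;> simp [stepOf]) x (stepsOf rels L₁) (stepsOf rels L₂)
      simpa using key

theorem E_red (hd1 : 1 ≤ d) {L L' : List (Fin n × Bool)} (h : FreeGroup.Red L L')
    (x : PresentedGroup rels) :
    E (fun a b => wordDist (presGens rels) a b ≤ d) (pathFrom x (stepsOf rels L))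
      (pathFrom x (stepsOf rels L')) := by
  induction h with
  | refl => exact E.refl _
  | tail _ step ih => exact ih.trans (E_step hd1 step x)

theorem E_mk_eq (hd1 : 1 ≤ d) {L L' : List (Fin n × Bool)}
    (h : FreeGroup.mk L = FreeGroup.mk L') (x : PresentedGroup rels) :
    E (fun a b => wordDist (presGens rels) a b ≤ d) (pathFrom x (stepsOf rels L))
      (pathFrom x (stepsOf rels L')) := by
  obtain ⟨c, h1, h2⟩ := FreeGroup.Red.exact.mp h
  exact (E_red hd1 h1 x).trans (E_red hd1 h2 x).symm

theorem relator_close {w : List (Fin n × Bool)} (hw : (stepsOf rels w).prod = 1)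
    (hlen : w.length ≤ 2 * d) (z : PresentedGroup rels) {i j : ℕ} (hij : i ≤ j)
    (hj : j ≤ w.length) :
    wordDist (presGens rels) (z * ((stepsOf rels w).take i).prod)
      (z * ((stepsOf rels w).take j).prod) ≤ d := by
  set s := stepsOf rels w with hsdef
  have hslen : s.length = w.length := by simp [hsdef, stepsOf]
  by_cases hcase : j - i ≤ d
  · have hsplit : s.take j = s.take i ++ (s.drop i).take (j - i) := by
      rw [← List.take_add]
      congr 1
      omega
    have h := wordDist_le (presGens rels) (x := z * (s.take i).prod)
      (y := z * (s.take j).prod) ((s.drop i).take (j - i))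
      (fun e he => mem_of_mem_stepsOf (hsdef ▸ List.drop_subset _ _ (List.take_subset _ _ he)))
      (by rw [mul_assoc, ← List.prod_append, ← hsplit])
    refine h.trans ?_
    rw [List.length_take]
    omega
  · apply close_symm presGens_inv
    have hone : (s.take j).prod * (s.drop j).prod = 1 := by
      rw [← List.prod_append, List.take_append_drop, hw]
    have h := wordDist_le (presGens rels) (x := z * (s.take j).prod)
      (y := z * (s.take i).prod) (s.drop j ++ s.take i)
      (fun e he => by
        rcases List.mem_append.mp he with h | h
        · exact mem_of_mem_stepsOf (hsdef ▸ List.drop_subset _ _ h)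
        · exact mem_of_mem_stepsOf (hsdef ▸ List.take_subset _ _ h))
      (by rw [List.prod_append, mul_assoc, ← mul_assoc (s.take j).prod, hone, one_mul])
    refine h.trans ?_
    rw [List.length_append, List.length_take, List.length_drop]
    omega

theorem contract_relator (hd1 : 1 ≤ d) {w : List (Fin n × Bool)}
    (hw : PresentedGroup.mk rels (FreeGroup.mk w) = 1) (hlen : w.length ≤ 2 * d)
    (z : PresentedGroup rels) :
    E (fun a b => wordDist (presGens rels) a b ≤ d) (pathFrom z (stepsOf rels w)) [z] := by
  have hprod : (stepsOf rels w).prod = 1 := by rw [prod_stepsOf, hw]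
  have hpair : ∀ a ∈ pathFrom z (stepsOf rels w), ∀ b ∈ pathFrom z (stepsOf rels w),
      wordDist (presGens rels) a b ≤ d := by
    intro a ha b hb
    obtain ⟨i, hi, rfl⟩ := mem_pathFrom ha
    obtain ⟨j, hj, rfl⟩ := mem_pathFrom hb
    simp only [stepsOf, List.length_map] at hi hj
    rcases le_total i j with hij | hij
    · exact relator_close hprod hlen z hij hj
    · exact close_symm presGens_inv (relator_close hprod hlen z hij hi)
  cases hww : w with
  | nil =>
      subst hww
      exact E.refl _
  | cons p t =>
      subst hww
      set Q := pathFrom (z * stepOf rels p) (stepsOf rels t) with hQ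
      have hQne : Q ≠ [] := pathFrom_ne_nil _ _
      have hP : pathFrom z (stepsOf rels (p :: t)) = z :: (Q.dropLast ++ [z]) := by
        conv_lhs => rw [pathFrom_concat z (stepsOf rels (p :: t))]
        rw [hprod, mul_one]
        rw [show pathFrom z (stepsOf rels (p :: t)) = z :: Q from rfl,
          List.dropLast_cons_of_ne_nil hQne]
        simp
      rw [hP]
      refine contract_clique z Q.dropLast ?_
      intro a ha b hb
      have hsub : ∀ c, c ∈ z :: Q.dropLast → c ∈ pathFrom z (stepsOf rels (p :: t)) := by
        intro c hc
        rcases List.mem_cons.mp hc with rfl | hc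
        · rw [pathFrom_eq_cons]
          simp
        · rw [show pathFrom z (stepsOf rels (p :: t)) = z :: Q from rfl]
          exact List.mem_cons_of_mem _ (List.dropLast_subset _ hc)
      exact hpair a (hsub a ha) b (hsub b hb)

theorem mk_toWord_eq_one {g : FreeGroup (Fin n)} (hg : g ∈ Subgroup.normalClosure rels) :
    PresentedGroup.mk rels g = 1 := mk_eq_one_iff.mpr hg

theorem contract_normalClosure (hd1 : 1 ≤ d) {r : ℕ}
    (hr : ∀ w ∈ rels, (FreeGroup.toWord w).length ≤ r) (hrd : r < 2 * d)
    {g : FreeGroup (Fin n)} (hg : g ∈ Subgroup.normalClosure rels) :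
    ∀ x : PresentedGroup rels,
      E (fun a b => wordDist (presGens rels) a b ≤ d) (pathFrom x (stepsOf rels g.toWord)) [x] := by
  have hg' : g ∈ Subgroup.closure (Group.conjugatesOfSet rels) := hg
  clear hg
  induction hg' using Subgroup.closure_induction with
  | mem y hy =>
      obtain ⟨ρ, hρ, hconj⟩ := Group.mem_conjugatesOfSet_iff.mp hy
      obtain ⟨u, rfl⟩ := isConj_iff.mp hconj
      intro x
      have hρ1 : PresentedGroup.mk rels ρ = 1 :=
        mk_toWord_eq_one (Subgroup.subset_normalClosure hρ)
      have hmkeq : FreeGroup.mk ((u * ρ * u⁻¹).toWord) =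
          FreeGroup.mk (u.toWord ++ ρ.toWord ++ FreeGroup.invRev u.toWord) := by
        rw [FreeGroup.mk_toWord, ← FreeGroup.mul_mk, ← FreeGroup.mul_mk,
          FreeGroup.mk_toWord, FreeGroup.mk_toWord, ← FreeGroup.toWord_inv,
          FreeGroup.mk_toWord]
      refine (E_mk_eq hd1 hmkeq x).trans ?_
      set su := stepsOf rels u.toWord with hsu
      set sρ := stepsOf rels ρ.toWord with hsρ
      set sinv := stepsOf rels (FreeGroup.invRev u.toWord) with hsinv
      set z := x * su.prod with hz
      have hzρ : z * sρ.prod = z := by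
        rw [hsρ, prod_stepsOf, FreeGroup.mk_toWord, hρ1, mul_one]
      obtain ⟨C, hC⟩ : ∃ C, pathFrom z sinv = z :: C := ⟨_, pathFrom_eq_cons z sinv⟩
      set A := pathFrom x su with hA
      set B := pathFrom z sρ with hB
      have hBsplit : B = B.dropLast ++ [z] := by
        conv_lhs => rw [hB, pathFrom_concat z sρ, hzρ, ← hB]
      have hdecomp : pathFrom x (stepsOf rels (u.toWord ++ ρ.toWord ++ FreeGroup.invRev u.toWord))
          = A.dropLast ++ B ++ C := by
        rw [stepsOf_append, stepsOf_append, ← hsu, ← hsρ, ← hsinv, List.append_assoc,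
          pathFrom_append, ← hz, pathFrom_append, ← hB, hzρ, hC, ← hA]
        conv_rhs => rw [hBsplit]
        simp [List.append_assoc]
      rw [hdecomp]
      have hrel : E (fun a b => wordDist (presGens rels) a b ≤ d) B [z] := by
        refine contract_relator hd1 (by rw [FreeGroup.mk_toWord]; exact hρ1) ?_ z
        exact (hr ρ hρ).trans (by omega)
      have e1 := E_context (close := fun a b => wordDist (presGens rels) a b ≤ d)
        A.dropLast C hrel
      refine e1.trans ?_
      have hback : A.dropLast ++ [z] ++ C =
          pathFrom x (stepsOf rels (u.toWord ++ FreeGroup.invRev u.toWord)) := by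
        rw [stepsOf_append, ← hsu, ← hsinv, pathFrom_append, ← hz, hC]
        simp
        rfl
      rw [hback]
      have hone : FreeGroup.mk (u.toWord ++ FreeGroup.invRev u.toWord) =
          FreeGroup.mk ([] : List (Fin n × Bool)) := by
        rw [← FreeGroup.mul_mk, FreeGroup.mk_toWord, ← FreeGroup.toWord_inv,
          FreeGroup.mk_toWord, ← FreeGroup.one_eq_mk, mul_inv_cancel]
      exact E_mk_eq hd1 hone x
  | one =>
      intro x
      simp only [FreeGroup.toWord_one, stepsOf_nil, pathFrom_nil]
      exact E.refl _
  | mul g₁ g₂ hg₁ hg₂ ih₁ ih₂ =>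
      intro x
      have hπ₁ : PresentedGroup.mk rels g₁ = 1 := mk_toWord_eq_one hg₁
      have hmkeq : FreeGroup.mk ((g₁ * g₂).toWord) = FreeGroup.mk (g₁.toWord ++ g₂.toWord) := by
        rw [FreeGroup.mk_toWord, ← FreeGroup.mul_mk, FreeGroup.mk_toWord, FreeGroup.mk_toWord]
      refine (E_mk_eq hd1 hmkeq x).trans ?_
      have hx1 : x * (stepsOf rels g₁.toWord).prod = x := by
        rw [prod_stepsOf, FreeGroup.mk_toWord, hπ₁, mul_one]
      have hdecomp : pathFrom x (stepsOf rels (g₁.toWord ++ g₂.toWord)) =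
          (pathFrom x (stepsOf rels g₁.toWord)).dropLast ++ pathFrom x (stepsOf rels g₂.toWord) := by
        rw [stepsOf_append, pathFrom_append, hx1]
      rw [hdecomp]
      have e1 := E_context (close := fun a b => wordDist (presGens rels) a b ≤ d)
        (pathFrom x (stepsOf rels g₁.toWord)).dropLast [] (ih₂ x)
      simp only [List.append_nil] at e1
      refine e1.trans ?_
      have : (pathFrom x (stepsOf rels g₁.toWord)).dropLast ++ [x] =
          pathFrom x (stepsOf rels g₁.toWord) := by
        conv_rhs => rw [pathFrom_concat x (stepsOf rels g₁.toWord), hx1]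
      rw [this]
      exact ih₁ x
  | inv g₀ hg₀ ih =>
      intro x
      have hπ : PresentedGroup.mk rels g₀ = 1 := mk_toWord_eq_one hg₀
      have hx1 : x * (stepsOf rels g₀.toWord).prod = x := by
        rw [prod_stepsOf, FreeGroup.mk_toWord, hπ, mul_one]
      have hsteps : stepsOf rels (g₀⁻¹.toWord) =
          ((stepsOf rels g₀.toWord).map fun s => s⁻¹).reverse := by
        rw [FreeGroup.toWord_inv]
        simp only [stepsOf, FreeGroup.invRev, List.map_reverse, List.map_map]
        congr 1
        apply List.map_congr_left
        intro p _
        obtain ⟨i, b⟩ := p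
        cases b <;> simp [stepOf, Function.comp]
      have hrev : pathFrom x (stepsOf rels (g₀⁻¹.toWord)) =
          (pathFrom x (stepsOf rels g₀.toWord)).reverse := by
        rw [hsteps, pathFrom_reverse, hx1]
      rw [hrev]
      have := E_reverse (close := fun a b => wordDist (presGens rels) a b ≤ d)
        (fun a b h => close_symm presGens_inv h) (ih x)
      simpa using this

theorem toPath (hd1 : 1 ≤ d) :
    ∀ (l : List (PresentedGroup rels)) (x : PresentedGroup rels), l.head? = some x →
      l.Chain' (fun a b => wordDist (presGens rels) a b ≤ d) →
      ∃ steps : List (PresentedGroup rels), (∀ s ∈ steps, s ∈ presGens rels) ∧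
        l.getLast? = some (x * steps.prod) ∧
        E (fun a b => wordDist (presGens rels) a b ≤ d) l (pathFrom x steps) := by
  intro l
  induction l with
  | nil => intro x h; simp at h
  | cons a t ih =>
      intro x hhead hchain
      have hax : a = x := by simpa using hhead
      subst hax
      cases t with
      | nil => exact ⟨[], by simp, by simp, E.refl _⟩
      | cons b t' =>
          change List.IsChain _ (a :: b :: t') at hchain
          rw [List.isChain_cons_cons] at hchain
          obtain ⟨hab, hchain'⟩ := hchain
          obtain ⟨steps', hmem', hlast', hE'⟩ := ih b rfl hchain'
          have hne : {m : ℕ | ∃ l : List (PresentedGroup rels), l.length = m ∧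
              (∀ s ∈ l, s ∈ presGens rels) ∧ a * l.prod = b}.Nonempty := by
            obtain ⟨l₀, h1, h2⟩ := exists_word a b
            exact ⟨l₀.length, l₀, rfl, h1, h2⟩
          obtain ⟨lw, hlwlen, hlwmem, hlwprod⟩ := Nat.sInf_mem hne
          have hlwd : lw.length ≤ d := by
            rw [hlwlen]
            exact hab
          refine ⟨lw ++ steps', ?_, ?_, ?_⟩
          · intro s hs
            rcases List.mem_append.mp hs with h | h
            exacts [hlwmem s h, hmem' s h]
          · rw [List.getLast?_cons_cons, hlast', List.prod_append, ← mul_assoc, hlwprod]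
          · obtain ⟨R, hR⟩ : ∃ R, pathFrom b steps' = b :: R := ⟨_, pathFrom_eq_cons b steps'⟩
            have e1 : E (fun a b => wordDist (presGens rels) a b ≤ d) (a :: b :: t')
                (a :: pathFrom b steps') := by
              have := E_context (close := fun a b => wordDist (presGens rels) a b ≤ d)
                [a] [] hE'
              simpa using this
            refine e1.trans ?_
            have e2 := insert_path (S := presGens rels) hd1 lw hlwmem hlwd [] R a
            rw [hlwprod] at e2
            simp only [List.nil_append] at e2
            have heq : pathFrom a (lw ++ steps') = pathFrom a lw ++ R := by
              rw [pathFrom_append, hlwprod, hR, pathFrom_concat a lw, hlwprod]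
              simp [List.append_assoc]
            rw [heq, hR]
            exact e2

end Presented

end Stmt7Aux

/-- Let `G = ⟨x₁,…,x_n ∣ R₁,…,R_p⟩` be a finite presentation with all relators
of length `≤ r`. If `2d > r` then the Rips complex `P_d(G)` is simply
connected: every simplicial loop (a list of vertices with consecutive word
distances `≤ d`, starting and ending at `x`) can be contracted to the constant
loop by elementary moves. -/
theorem stmt7 {n : ℕ} (rels : Set (FreeGroup (Fin n))) (hfin : rels.Finite)
    (r d : ℕ) (hr : ∀ w ∈ rels, (FreeGroup.toWord w).length ≤ r)
    (hd : r < 2 * d) :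
    ∀ (x : PresentedGroup rels) (l : List (PresentedGroup rels)),
      l.head? = some x → l.getLast? = some x →
      l.Chain' (fun a b => wordDist (presGens rels) a b ≤ d) →
      Relation.EqvGen (RipsMove (fun a b => wordDist (presGens rels) a b ≤ d))
        l [x] := by
  intro x l hhead hlast hchain
  have hd1 : 1 ≤ d := by omega
  obtain ⟨steps, hmem, hlast', hE⟩ := Stmt7Aux.toPath hd1 l x hhead hchain
  rw [hlast] at hlast'
  have hprod : steps.prod = 1 := by
    have := Option.some.inj hlast'
    exact mul_left_cancel (a := x) (by rw [← this, mul_one])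
  obtain ⟨w, hw⟩ := Stmt7Aux.exists_word_of_steps steps hmem
  have h1 : PresentedGroup.mk rels (FreeGroup.mk w) = 1 := by
    rw [← Stmt7Aux.prod_stepsOf, hw, hprod]
  have hmemN : FreeGroup.mk w ∈ Subgroup.normalClosure rels := Stmt7Aux.mk_eq_one_iff.mp h1
  have e2 : Stmt7Aux.E (fun a b => wordDist (presGens rels) a b ≤ d)
      (Stmt7Aux.pathFrom x (Stmt7Aux.stepsOf rels w))
      (Stmt7Aux.pathFrom x (Stmt7Aux.stepsOf rels (FreeGroup.mk w).toWord)) :=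
    Stmt7Aux.E_mk_eq hd1 FreeGroup.mk_toWord.symm x
  have e3 := Stmt7Aux.contract_normalClosure hd1 hr hd hmemN x
  rw [← hw] at hE
  exact (hE.trans (e2.trans e3))
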